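/- Fix S ≥ 3 and T ≥ 4, and let A be the transition-count design matrix of the THMC model without initial parameters and without self-loops (rows indexed by ordered pairs (i,j) with i≠j, columns indexed by words in [S]^T with no two consecutive equal letters). Then an integer vector y ∈ ℤ^{S(S−1)} lies in the lattice ℤA generated by the columns of A if and only if the sum of its coordinates is divisible by T−1. -/

import Mathlib

/-- The number of transitions `p.1 → p.2` in the word `w` of length `T` over `[S]`. -/
def trCount (S T : ℕ) (w : Fin T → Fin S) (p : Fin S × Fin S) : ℕ :=
  (Finset.univ.filter (fun t : Fin (T - 1) =>
    w ⟨t.1, by have := t.2; omega⟩ = p.1 ∧ w ⟨t.1 + 1, by have := t.2; omega⟩ = p.2)).card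

/-- A word has no self-loops (no two consecutive equal letters). -/
def NoLoop (S T : ℕ) (w : Fin T → Fin S) : Prop :=
  ∀ t : Fin (T - 1), w ⟨t.1, by have := t.2; omega⟩ ≠ w ⟨t.1 + 1, by have := t.2; omega⟩

instance (S T : ℕ) : DecidablePred (NoLoop S T) := fun w => by
  unfold NoLoop; infer_instance

lemma trCount_sum_int (S T : ℕ) (w : Fin T → Fin S) (p : Fin S × Fin S) :
    (trCount S T w p : ℤ) = ∑ t : Fin (T-1),
      if (w ⟨t.1, by have := t.2; omega⟩ = p.1 ∧ w ⟨t.1 + 1, by have := t.2; omega⟩ = p.2)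
      then (1:ℤ) else 0 := by
  rw [trCount, Finset.card_filter]
  push_cast
  rfl

lemma colSum (S T : ℕ) (w : Fin T → Fin S) (hw : NoLoop S T w) :
    ∑ p : {p : Fin S × Fin S // p.1 ≠ p.2}, (trCount S T w p.1 : ℤ) = ((T - 1 : ℕ) : ℤ) := by
  simp only [trCount_sum_int]
  rw [Finset.sum_comm]
  have : ∀ t : Fin (T-1), ∑ p : {p : Fin S × Fin S // p.1 ≠ p.2},
      (if (w ⟨t.1, by have := t.2; omega⟩ = p.1.1 ∧ w ⟨t.1 + 1, by have := t.2; omega⟩ = p.1.2)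
      then (1:ℤ) else 0) = 1 := by
    intro t
    have h := hw t
    rw [Finset.sum_eq_single (⟨(w ⟨t.1, by have := t.2; omega⟩, w ⟨t.1+1, by have := t.2; omega⟩), h⟩ :
        {p : Fin S × Fin S // p.1 ≠ p.2})]
    · simp
    · intro b _ hb
      rw [if_neg]
      intro ⟨h1, h2⟩
      exact hb (by apply Subtype.ext; exact Prod.ext h1.symm h2.symm)
    · simp
  simp [this]

lemma lastDiff (S m : ℕ) (w w' : Fin (m+4) → Fin S)
    (hagree : ∀ t : Fin (m+4), t.1 < m+3 → w t = w' t)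
    (hx : w ⟨m+2, by omega⟩ ≠ w ⟨m+3, by omega⟩)
    (hy : w' ⟨m+2, by omega⟩ ≠ w' ⟨m+3, by omega⟩) :
    ((fun p : {p : Fin S × Fin S // p.1 ≠ p.2} => (trCount S (m+4) w p.1 : ℤ)) -
     (fun p => (trCount S (m+4) w' p.1 : ℤ)))
    = Pi.single ⟨(w ⟨m+2, by omega⟩, w ⟨m+3, by omega⟩), hx⟩ 1
      - Pi.single ⟨(w' ⟨m+2, by omega⟩, w' ⟨m+3, by omega⟩), hy⟩ 1 := by
  funext p
  simp only [Pi.sub_apply, trCount_sum_int]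
  have key : ∀ v : Fin (m+4) → Fin S,
      (∑ t : Fin (m+4-1), if (v ⟨t.1, by have := t.2; omega⟩ = p.1.1 ∧
        v ⟨t.1 + 1, by have := t.2; omega⟩ = p.1.2) then (1:ℤ) else 0)
      = (∑ t : Fin (m+2), if (v ⟨t.1, by have := t.2; omega⟩ = p.1.1 ∧
        v ⟨t.1 + 1, by have := t.2; omega⟩ = p.1.2) then (1:ℤ) else 0)
        + (if (v ⟨m+2, by omega⟩ = p.1.1 ∧ v ⟨m+3, by omega⟩ = p.1.2) then (1:ℤ) else 0) := by
    intro v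
    exact Fin.sum_univ_castSucc (n := m+2) (f := fun t : Fin (m+3) =>
      if (v ⟨t.1, by have := t.2; omega⟩ = p.1.1 ∧
        v ⟨t.1 + 1, by have := t.2; omega⟩ = p.1.2) then (1:ℤ) else 0)
  rw [key w, key w']
  have hpre : (∑ t : Fin (m+2), if (w ⟨t.1, by have := t.2; omega⟩ = p.1.1 ∧
        w ⟨t.1 + 1, by have := t.2; omega⟩ = p.1.2) then (1:ℤ) else 0)
      = (∑ t : Fin (m+2), if (w' ⟨t.1, by have := t.2; omega⟩ = p.1.1 ∧
        w' ⟨t.1 + 1, by have := t.2; omega⟩ = p.1.2) then (1:ℤ) else 0) := by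
    apply Finset.sum_congr rfl
    intro t _
    rw [hagree ⟨t.1, by omega⟩ (show t.1 < m+3 by have := t.2; omega),
        hagree ⟨t.1+1, by omega⟩ (show t.1+1 < m+3 by have := t.2; omega)]
  rw [hpre]
  ring_nf
  have hsingle : ∀ (a b : Fin S) (h : a ≠ b),
      (Pi.single (M := fun _ : {p : Fin S × Fin S // p.1 ≠ p.2} => ℤ) ⟨(a,b),h⟩ (1:ℤ)) p
      = if (a = p.1.1 ∧ b = p.1.2) then (1:ℤ) else 0 := by
    intro a b h
    rw [Pi.single_apply]
    congr 1
    simp [eq_comm, Subtype.ext_iff, Prod.ext_iff]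
  rw [hsingle, hsingle]

lemma firstDiff (S m : ℕ) (w w' : Fin (m+4) → Fin S)
    (hagree : ∀ t : Fin (m+4), 0 < t.1 → w t = w' t)
    (hx : w ⟨0, by omega⟩ ≠ w ⟨1, by omega⟩)
    (hy : w' ⟨0, by omega⟩ ≠ w' ⟨1, by omega⟩) :
    ((fun p : {p : Fin S × Fin S // p.1 ≠ p.2} => (trCount S (m+4) w p.1 : ℤ)) -
     (fun p => (trCount S (m+4) w' p.1 : ℤ)))
    = Pi.single ⟨(w ⟨0, by omega⟩, w ⟨1, by omega⟩), hx⟩ 1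
      - Pi.single ⟨(w' ⟨0, by omega⟩, w' ⟨1, by omega⟩), hy⟩ 1 := by
  funext p
  simp only [Pi.sub_apply, trCount_sum_int]
  have key : ∀ v : Fin (m+4) → Fin S,
      (∑ t : Fin (m+4-1), if (v ⟨t.1, by have := t.2; omega⟩ = p.1.1 ∧
        v ⟨t.1 + 1, by have := t.2; omega⟩ = p.1.2) then (1:ℤ) else 0)
      = (if (v ⟨0, by omega⟩ = p.1.1 ∧ v ⟨1, by omega⟩ = p.1.2) then (1:ℤ) else 0)
        + (∑ t : Fin (m+2), if (v ⟨t.1 + 1, by have := t.2; omega⟩ = p.1.1 ∧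
        v ⟨t.1 + 1 + 1, by have := t.2; omega⟩ = p.1.2) then (1:ℤ) else 0) := by
    intro v
    exact Fin.sum_univ_succ (n := m+2) (f := fun t : Fin (m+3) =>
      if (v ⟨t.1, by have := t.2; omega⟩ = p.1.1 ∧
        v ⟨t.1 + 1, by have := t.2; omega⟩ = p.1.2) then (1:ℤ) else 0)
  rw [key w, key w']
  have hpre : (∑ t : Fin (m+2), if (w ⟨t.1 + 1, by have := t.2; omega⟩ = p.1.1 ∧
        w ⟨t.1 + 1 + 1, by have := t.2; omega⟩ = p.1.2) then (1:ℤ) else 0)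
      = (∑ t : Fin (m+2), if (w' ⟨t.1 + 1, by have := t.2; omega⟩ = p.1.1 ∧
        w' ⟨t.1 + 1 + 1, by have := t.2; omega⟩ = p.1.2) then (1:ℤ) else 0) := by
    apply Finset.sum_congr rfl
    intro t _
    rw [hagree ⟨t.1+1, by have := t.2; omega⟩ (show 0 < t.1+1 by omega),
        hagree ⟨t.1+1+1, by have := t.2; omega⟩ (show 0 < t.1+1+1 by omega)]
  rw [hpre]
  have hsingle : ∀ (a b : Fin S) (h : a ≠ b),
      (Pi.single (M := fun _ : {p : Fin S × Fin S // p.1 ≠ p.2} => ℤ) ⟨(a,b),h⟩ (1:ℤ)) p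
      = if (a = p.1.1 ∧ b = p.1.2) then (1:ℤ) else 0 := by
    intro a b h
    rw [Pi.single_apply]
    congr 1
    simp [eq_comm, Subtype.ext_iff, Prod.ext_iff]
  rw [hsingle, hsingle]
  ring

/-- Word ending with transition `i → x`, alternating `i`/`z` before. -/
def wEnd (S m : ℕ) (i x z : Fin S) : Fin (m+4) → Fin S :=
  fun t => if t.1 = m+3 then x else (if t.1 % 2 = (m+2) % 2 then i else z)

lemma wEnd_noLoop (S m : ℕ) (i x z : Fin S) (hx : x ≠ i) (hz : z ≠ i) :
    NoLoop S (m+4) (wEnd S m i x z) := by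
  intro t
  have ht := t.2
  simp only [wEnd]
  split_ifs with h1 h2 h3 h4 h5 <;> first
    | omega
    | (intro he; first | exact hx he.symm | exact hz he.symm | exact hz he | omega)

lemma wEnd_last (S m : ℕ) (i x z : Fin S) :
    wEnd S m i x z ⟨m+3, by omega⟩ = x := by simp [wEnd]

lemma wEnd_sndlast (S m : ℕ) (i x z : Fin S) :
    wEnd S m i x z ⟨m+2, by omega⟩ = i := by simp [wEnd]

/-- Word starting with transition `x → j`, alternating `j`/`z` after. -/
def wStart (S m : ℕ) (j x z : Fin S) : Fin (m+4) → Fin S :=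
  fun t => if t.1 = 0 then x else (if t.1 % 2 = 1 then j else z)

lemma wStart_noLoop (S m : ℕ) (j x z : Fin S) (hx : x ≠ j) (hz : z ≠ j) :
    NoLoop S (m+4) (wStart S m j x z) := by
  intro t
  have ht := t.2
  show (if (t.1 : ℕ) = 0 then x else (if t.1 % 2 = 1 then j else z))
      ≠ (if (t.1 + 1 : ℕ) = 0 then x else (if (t.1 + 1) % 2 = 1 then j else z))
  rw [if_neg (show ¬ (t.1 + 1 : ℕ) = 0 by omega)]
  by_cases h0 : (t.1 : ℕ) = 0
  · rw [if_pos h0, if_pos (by omega)]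
    exact hx
  · rw [if_neg h0]
    by_cases hp : (t.1 : ℕ) % 2 = 1
    · rw [if_pos hp, if_neg (by omega)]
      exact fun he => hz he.symm
    · rw [if_neg hp, if_pos (by omega)]
      exact hz

lemma wStart_fst (S m : ℕ) (j x z : Fin S) :
    wStart S m j x z ⟨0, by omega⟩ = x := by simp [wStart]

lemma wStart_snd (S m : ℕ) (j x z : Fin S) :
    wStart S m j x z ⟨1, by omega⟩ = j := by simp [wStart]

/-- The lattice generated by columns. -/
def Hgrp (S m : ℕ) : AddSubgroup ({p : Fin S × Fin S // p.1 ≠ p.2} → ℤ) :=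
  AddSubgroup.closure
    {v : {p : Fin S × Fin S // p.1 ≠ p.2} → ℤ | ∃ w : Fin (m+4) → Fin S, NoLoop S (m+4) w ∧
      v = fun p => (trCount S (m+4) w p.1 : ℤ)}

lemma sameSource_mem (S m : ℕ) (i x y z : Fin S) (hx : i ≠ x) (hy : i ≠ y) (hz : z ≠ i) :
    Pi.single (⟨(i,x),hx⟩ : {p : Fin S × Fin S // p.1 ≠ p.2}) (1:ℤ)
      - Pi.single ⟨(i,y),hy⟩ 1 ∈ Hgrp S m := by
  have nl : NoLoop S (m+4) (wEnd S m i x z) := wEnd_noLoop S m i x z (Ne.symm hx) hz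
  have nl' : NoLoop S (m+4) (wEnd S m i y z) := wEnd_noLoop S m i y z (Ne.symm hy) hz
  have hagree : ∀ t : Fin (m+4), t.1 < m+3 → wEnd S m i x z t = wEnd S m i y z t := by
    intro t ht
    have h : ¬ ((t.1:ℕ) = m+3) := by omega
    show (if (t.1:ℕ) = m+3 then x else (if t.1 % 2 = (m+2) % 2 then i else z))
        = (if (t.1:ℕ) = m+3 then y else (if t.1 % 2 = (m+2) % 2 then i else z))
    rw [if_neg h, if_neg h]
  have hne : wEnd S m i x z ⟨m+2, by omega⟩ ≠ wEnd S m i x z ⟨m+3, by omega⟩ := by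
    rw [wEnd_sndlast, wEnd_last]; exact hx
  have hne' : wEnd S m i y z ⟨m+2, by omega⟩ ≠ wEnd S m i y z ⟨m+3, by omega⟩ := by
    rw [wEnd_sndlast, wEnd_last]; exact hy
  have key := lastDiff S m (wEnd S m i x z) (wEnd S m i y z) hagree hne hne'
  have e1 : (⟨(wEnd S m i x z ⟨m+2, by omega⟩, wEnd S m i x z ⟨m+3, by omega⟩), hne⟩ :
      {p : Fin S × Fin S // p.1 ≠ p.2}) = ⟨(i,x),hx⟩ :=
    Subtype.ext (Prod.ext (wEnd_sndlast S m i x z) (wEnd_last S m i x z))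
  have e2 : (⟨(wEnd S m i y z ⟨m+2, by omega⟩, wEnd S m i y z ⟨m+3, by omega⟩), hne'⟩ :
      {p : Fin S × Fin S // p.1 ≠ p.2}) = ⟨(i,y),hy⟩ :=
    Subtype.ext (Prod.ext (wEnd_sndlast S m i y z) (wEnd_last S m i y z))
  rw [e1, e2] at key
  rw [← key]
  exact sub_mem (AddSubgroup.subset_closure ⟨_, nl, rfl⟩)
    (AddSubgroup.subset_closure ⟨_, nl', rfl⟩)

lemma sameTarget_mem (S m : ℕ) (j x y z : Fin S) (hx : x ≠ j) (hy : y ≠ j) (hz : z ≠ j) :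
    Pi.single (⟨(x,j),hx⟩ : {p : Fin S × Fin S // p.1 ≠ p.2}) (1:ℤ)
      - Pi.single ⟨(y,j),hy⟩ 1 ∈ Hgrp S m := by
  have nl : NoLoop S (m+4) (wStart S m j x z) := wStart_noLoop S m j x z hx hz
  have nl' : NoLoop S (m+4) (wStart S m j y z) := wStart_noLoop S m j y z hy hz
  have hagree : ∀ t : Fin (m+4), 0 < t.1 → wStart S m j x z t = wStart S m j y z t := by
    intro t ht
    have h : ¬ ((t.1:ℕ) = 0) := by omega
    show (if (t.1:ℕ) = 0 then x else (if t.1 % 2 = 1 then j else z))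
        = (if (t.1:ℕ) = 0 then y else (if t.1 % 2 = 1 then j else z))
    rw [if_neg h, if_neg h]
  have hne : wStart S m j x z ⟨0, by omega⟩ ≠ wStart S m j x z ⟨1, by omega⟩ := by
    rw [wStart_fst, wStart_snd]; exact hx
  have hne' : wStart S m j y z ⟨0, by omega⟩ ≠ wStart S m j y z ⟨1, by omega⟩ := by
    rw [wStart_fst, wStart_snd]; exact hy
  have key := firstDiff S m (wStart S m j x z) (wStart S m j y z) hagree hne hne'
  have e1 : (⟨(wStart S m j x z ⟨0, by omega⟩, wStart S m j x z ⟨1, by omega⟩), hne⟩ :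
      {p : Fin S × Fin S // p.1 ≠ p.2}) = ⟨(x,j),hx⟩ :=
    Subtype.ext (Prod.ext (wStart_fst S m j x z) (wStart_snd S m j x z))
  have e2 : (⟨(wStart S m j y z ⟨0, by omega⟩, wStart S m j y z ⟨1, by omega⟩), hne'⟩ :
      {p : Fin S × Fin S // p.1 ≠ p.2}) = ⟨(y,j),hy⟩ :=
    Subtype.ext (Prod.ext (wStart_fst S m j y z) (wStart_snd S m j y z))
  rw [e1, e2] at key
  rw [← key]
  exact sub_mem (AddSubgroup.subset_closure ⟨_, nl, rfl⟩)
    (AddSubgroup.subset_closure ⟨_, nl', rfl⟩)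

lemma singleDiff_mem (S m : ℕ) (hS : 3 ≤ S) (p q : {p : Fin S × Fin S // p.1 ≠ p.2}) :
    Pi.single p (1:ℤ) - Pi.single q 1 ∈ Hgrp S m := by
  obtain ⟨⟨i, j⟩, hij⟩ := p
  obtain ⟨⟨k, l⟩, hkl⟩ := q
  simp only [ne_eq] at hij hkl
  -- find c distinct from i and k
  have hcard : (({i, k} : Finset (Fin S))ᶜ).Nonempty := by
    rw [← Finset.card_pos, Finset.card_compl]
    have h2 : ({i, k} : Finset (Fin S)).card ≤ 2 :=
      (Finset.card_insert_le _ _).trans (by simp)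
    simp only [Fintype.card_fin]
    omega
  obtain ⟨c, hc⟩ := hcard
  simp only [Finset.mem_compl, Finset.mem_insert, Finset.mem_singleton, not_or] at hc
  obtain ⟨hci, hck⟩ := hc
  have hic : i ≠ c := fun h => hci h.symm
  have hkc : k ≠ c := fun h => hck h.symm
  have h1 := sameSource_mem S m i j c c hij hic hci
  have h2 := sameTarget_mem S m c i k i hic hkc hic
  have h3 := sameSource_mem S m k c l c hkc hkl hck
  have hsum := add_mem (add_mem h1 h2) h3
  rwa [sub_add_sub_cancel, sub_add_sub_cancel] at hsum

/-- For the THMC model without initial parameters and without self-loops, an integer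
vector lies in the lattice generated by the columns of the design matrix iff its
coordinate sum is divisible by `T - 1`. -/
theorem stmt5 (S T : ℕ) (hS : 3 ≤ S) (hT : 4 ≤ T)
    (y : {p : Fin S × Fin S // p.1 ≠ p.2} → ℤ) :
    y ∈ AddSubgroup.closure
      {v : {p : Fin S × Fin S // p.1 ≠ p.2} → ℤ | ∃ w : Fin T → Fin S, NoLoop S T w ∧
        v = fun p => (trCount S T w p.1 : ℤ)} ↔
    ((T : ℤ) - 1) ∣ ∑ p : {p : Fin S × Fin S // p.1 ≠ p.2}, y p := by
  obtain ⟨m, rfl⟩ : ∃ m, T = m + 4 := ⟨T - 4, by omega⟩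
  have hcast : ((m + 4 : ℕ) : ℤ) - 1 = ((m + 4 - 1 : ℕ) : ℤ) := by push_cast; ring
  show y ∈ Hgrp S m ↔ _
  constructor
  · intro hy
    refine AddSubgroup.closure_induction (p := fun v _ =>
      (((m + 4 : ℕ) : ℤ) - 1) ∣ ∑ p : {p : Fin S × Fin S // p.1 ≠ p.2}, v p)
      ?_ ?_ ?_ ?_ hy
    · rintro v ⟨w, hw, rfl⟩
      rw [colSum S (m+4) w hw, ← hcast]
    · simp
    · intro a b _ _ ha hb
      simp only [Pi.add_apply, Finset.sum_add_distrib]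
      exact dvd_add ha hb
    · intro a _ ha
      simp only [Pi.neg_apply, Finset.sum_neg_distrib]
      exact ha.neg_right
  · rintro ⟨c, hc⟩
    have hab : (⟨0, by omega⟩ : Fin S) ≠ ⟨1, by omega⟩ := by
      simp [Fin.ext_iff]
    set a : Fin S := ⟨0, by omega⟩
    set b : Fin S := ⟨1, by omega⟩
    have hba : b ≠ a := Ne.symm hab
    -- base column
    have nl0 : NoLoop S (m+4) (wEnd S m a b b) := wEnd_noLoop S m a b b hba hba
    set v0 : {p : Fin S × Fin S // p.1 ≠ p.2} → ℤ :=
      fun p => (trCount S (m+4) (wEnd S m a b b) p.1 : ℤ) with hv0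
    have hv0mem : v0 ∈ Hgrp S m := AddSubgroup.subset_closure ⟨_, nl0, rfl⟩
    have hv0sum : ∑ p : {p : Fin S × Fin S // p.1 ≠ p.2}, v0 p = ((m + 4 : ℕ) : ℤ) - 1 := by
      rw [hv0, colSum S (m+4) _ nl0, hcast]
    set z : {p : Fin S × Fin S // p.1 ≠ p.2} → ℤ := y - c • v0 with hzdef
    have hzsum : ∑ p : {p : Fin S × Fin S // p.1 ≠ p.2}, z p = 0 := by
      simp only [hzdef, Pi.sub_apply, Pi.smul_apply, smul_eq_mul, Finset.sum_sub_distrib,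
        ← Finset.mul_sum, hv0sum, hc]
      ring
    set q0 : {p : Fin S × Fin S // p.1 ≠ p.2} := ⟨(a, b), hab⟩ with hq0
    have hdecomp : z = ∑ p : {p : Fin S × Fin S // p.1 ≠ p.2},
        z p • (Pi.single p (1:ℤ) - Pi.single (M := fun _ => ℤ) q0 1) := by
      have h1 : (∑ p : {p : Fin S × Fin S // p.1 ≠ p.2}, z p • Pi.single p (1:ℤ)) = z := by
        funext r
        simp only [Finset.sum_apply, Pi.smul_apply, Pi.single_apply, smul_eq_mul,
          mul_ite, mul_one, mul_zero]
        rw [Finset.sum_ite_eq Finset.univ r z]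
        simp
      have h2 : (∑ p : {p : Fin S × Fin S // p.1 ≠ p.2},
          z p • Pi.single (M := fun _ => ℤ) q0 1) = 0 := by
        rw [← Finset.sum_smul, hzsum, zero_smul]
      have h3 : (∑ p : {p : Fin S × Fin S // p.1 ≠ p.2},
            z p • (Pi.single p (1:ℤ) - Pi.single (M := fun _ => ℤ) q0 1))
          = (∑ p : {p : Fin S × Fin S // p.1 ≠ p.2}, z p • Pi.single p (1:ℤ))
            - (∑ p : {p : Fin S × Fin S // p.1 ≠ p.2},
              z p • Pi.single (M := fun _ => ℤ) q0 1) := by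
        rw [← Finset.sum_sub_distrib]
        exact Finset.sum_congr rfl (fun p _ => smul_sub _ _ _)
      rw [h3, h1, h2, sub_zero]
    have hzmem : z ∈ Hgrp S m := by
      rw [hdecomp]
      exact AddSubgroup.sum_mem _ (fun p _ =>
        AddSubgroup.zsmul_mem _ (singleDiff_mem S m hS p q0) _)
    have : z + c • v0 ∈ Hgrp S m :=
      add_mem hzmem (AddSubgroup.zsmul_mem _ hv0mem c)
    simpa [hzdef] using this
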